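/- For x > 0, d > 0, P_t > 0, α > 2, integers M ≥ 1, N ≥ 1, define F_Γ(x | d) = [1 - e^{-x d^α / P_t}/(x+1)^{M-1}]^N. Then averaging over d with density f_d(r) = 2r/(ρ²-ξ²) on [ξ,ρ]: ∫_ξ^ρ F_Γ(x|r) (2r/(ρ²-ξ²)) dr = 1 + (2/(α(ρ²-ξ²))) (P_t/x)^{2/α} ∑_{m=1}^N C(N,m) (-1)^m / (m^{2/α} (x+1)^{m(M-1)}) · [Γ(2/α, x m ξ^α/P_t) - Γ(2/α, x m ρ^α/P_t)]. -/

import Mathlib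

open Real MeasureTheory Set intervalIntegral

/-- Upper incomplete gamma function. -/
noncomputable def upperGamma (a x : ℝ) : ℝ := ∫ t in Set.Ioi x, t ^ (a - 1) * Real.exp (-t)

lemma integrandIntegrable {a : ℝ} (ha : 0 < a) :
    IntegrableOn (fun t : ℝ => t ^ (a - 1) * Real.exp (-t)) (Set.Ioi 0) := by
  simpa [mul_comm] using Real.GammaIntegral_convergent ha

lemma upperGamma_sub {a x₁ x₂ : ℝ} (ha : 0 < a) (h1 : 0 < x₁) (h12 : x₁ ≤ x₂) :
    upperGamma a x₁ - upperGamma a x₂ = ∫ t in x₁..x₂, t ^ (a - 1) * Real.exp (-t) := by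
  have hint := integrandIntegrable ha
  have h1' : IntegrableOn (fun t : ℝ => t ^ (a - 1) * Real.exp (-t)) (Set.Ioc x₁ x₂) :=
    hint.mono_set (fun t ht => lt_trans h1 ht.1)
  have h2' : IntegrableOn (fun t : ℝ => t ^ (a - 1) * Real.exp (-t)) (Set.Ioi x₂) :=
    hint.mono_set (fun t ht => lt_of_lt_of_le h1 (le_of_lt (lt_of_le_of_lt h12 ht)))
  have hu : Set.Ioc x₁ x₂ ∪ Set.Ioi x₂ = Set.Ioi x₁ := Set.Ioc_union_Ioi_eq_Ioi h12
  have := MeasureTheory.setIntegral_union (Set.Ioc_disjoint_Ioi le_rfl) measurableSet_Ioi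
      h1' h2' (f := fun t : ℝ => t ^ (a - 1) * Real.exp (-t)) (μ := volume)
  rw [hu] at this
  rw [intervalIntegral.integral_of_le h12, upperGamma, upperGamma, this]
  ring

lemma subst_lemma {k α ξ ρ : ℝ} (hk : 0 < k) (hα : 0 < α) (hξ : 0 < ξ) (hξρ : ξ < ρ) :
    ∫ r in ξ..ρ, 2 * r * Real.exp (-(k * r ^ α)) =
      (2 / α) * k ^ (-(2 / α)) *
        ∫ t in (k * ξ ^ α)..(k * ρ ^ α), t ^ (2 / α - 1) * Real.exp (-t) := by
  set f : ℝ → ℝ := fun r => k * r ^ α with hf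
  set f' : ℝ → ℝ := fun r => k * (α * r ^ (α - 1)) with hf'
  set g : ℝ → ℝ := fun t => (2 / α) * k ^ (-(2 / α)) * (t ^ (2 / α - 1) * Real.exp (-t)) with hg
  have huIcc : Set.uIcc ξ ρ = Set.Icc ξ ρ := Set.uIcc_of_le hξρ.le
  have hpos : ∀ r ∈ Set.uIcc ξ ρ, 0 < r := by
    intro r hr; rw [huIcc] at hr; exact lt_of_lt_of_le hξ hr.1
  have hderiv : ∀ r ∈ Set.uIcc ξ ρ, HasDerivAt f (f' r) r := by
    intro r hr
    exact (Real.hasDerivAt_rpow_const (Or.inl (hpos r hr).ne')).const_mul k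
  have hcont : ContinuousOn f' (Set.uIcc ξ ρ) := by
    apply ContinuousOn.mul continuousOn_const
    apply ContinuousOn.mul continuousOn_const
    intro r hr
    exact (Real.continuousAt_rpow_const r _ (Or.inl (hpos r hr).ne')).continuousWithinAt
  have himg : f '' Set.uIcc ξ ρ ⊆ {t : ℝ | 0 < t} := by
    rintro t ⟨r, hr, rfl⟩
    exact mul_pos hk (Real.rpow_pos_of_pos (hpos r hr) α)
  have hgc : ContinuousOn g (f '' Set.uIcc ξ ρ) := by
    apply ContinuousOn.mono ?_ himg
    apply ContinuousOn.mul continuousOn_const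
    apply ContinuousOn.mul
    · intro t ht
      exact (Real.continuousAt_rpow_const t _ (Or.inl (ne_of_gt ht))).continuousWithinAt
    · exact (Real.continuous_exp.comp continuous_neg).continuousOn
  have key := intervalIntegral.integral_comp_smul_deriv' hderiv hcont hgc
  have heq : ∀ r ∈ Set.uIcc ξ ρ, 2 * r * Real.exp (-(k * r ^ α)) = f' r • (g ∘ f) r := by
    intro r hr
    have hr0 : 0 < r := hpos r hr
    simp only [hf, hf', hg, Function.comp, smul_eq_mul]
    rw [Real.mul_rpow hk.le (Real.rpow_pos_of_pos hr0 α).le, ← Real.rpow_mul hr0.le]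
    have e1 : k ^ (-(2 / α)) * k ^ (2 / α - 1) = k⁻¹ := by
      rw [← Real.rpow_add hk, show -(2 / α) + (2 / α - 1) = -1 by ring, Real.rpow_neg_one]
    have e2 : r ^ (α - 1) * r ^ (α * (2 / α - 1)) = r := by
      rw [← Real.rpow_add hr0, show α - 1 + α * (2 / α - 1) = 1 by
        field_simp; norm_num, Real.rpow_one]
    rw [show k * (α * r ^ (α - 1)) *
        (2 / α * k ^ (-(2 / α)) * (k ^ (2 / α - 1) * r ^ (α * (2 / α - 1)) *
          Real.exp (-(k * r ^ α)))) =
        (α * (2 / α)) * (k * (k ^ (-(2 / α)) * k ^ (2 / α - 1))) *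
          (r ^ (α - 1) * r ^ (α * (2 / α - 1))) * Real.exp (-(k * r ^ α)) from by ring,
      e1, e2, mul_inv_cancel₀ hk.ne']
    field_simp
  rw [intervalIntegral.integral_congr heq, key]
  simp only [hg]
  rw [intervalIntegral.integral_const_mul]

/-- Averaging the conditional SINR CDF F_Γ(x|r) = [1 - e^{-x r^α/P_t}/(x+1)^{M-1}]^N
    over the distance density 2r/(ρ²-ξ²) on [ξ,ρ]. -/
theorem avg_sinr_cdf (x Pt α ξ ρ : ℝ) (M N : ℕ) (hx : 0 < x) (hPt : 0 < Pt)
    (hα : 2 < α) (hM : 1 ≤ M) (hN : 1 ≤ N) (hξ : 0 < ξ) (hξρ : ξ < ρ) :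
    ∫ r in ξ..ρ,
        (1 - Real.exp (-(x * r ^ α) / Pt) / (x + 1) ^ (M - 1)) ^ N * (2 * r / (ρ ^ 2 - ξ ^ 2)) =
      1 + (2 / (α * (ρ ^ 2 - ξ ^ 2))) * (Pt / x) ^ (2 / α) *
        ∑ m ∈ Finset.Icc 1 N,
          (N.choose m : ℝ) * (-1 : ℝ) ^ m /
              ((m : ℝ) ^ (2 / α) * (x + 1) ^ (m * (M - 1))) *
            (upperGamma (2 / α) (x * m * ξ ^ α / Pt) -
              upperGamma (2 / α) (x * m * ρ ^ α / Pt)) := by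
  have hα0 : (0:ℝ) < α := by linarith
  have hx1 : (0:ℝ) < x + 1 := by linarith
  have hD : (0:ℝ) < ρ ^ 2 - ξ ^ 2 := by nlinarith
  set g : ℕ → ℝ → ℝ := fun m r =>
    (N.choose m : ℝ) * (-1) ^ m / (x + 1) ^ (m * (M - 1)) / (ρ ^ 2 - ξ ^ 2) *
      (2 * r * Real.exp (-(x * m / Pt * r ^ α))) with hgdef
  -- Step 1 : pointwise binomial expansion
  have hpt : ∀ r : ℝ,
      (1 - Real.exp (-(x * r ^ α) / Pt) / (x + 1) ^ (M - 1)) ^ N * (2 * r / (ρ ^ 2 - ξ ^ 2)) =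
        ∑ m ∈ Finset.range (N + 1), g m r := by
    intro r
    rw [show (1 - Real.exp (-(x * r ^ α) / Pt) / (x + 1) ^ (M - 1)) =
        (-(Real.exp (-(x * r ^ α) / Pt) / (x + 1) ^ (M - 1)) + 1) from by ring, add_pow,
      Finset.sum_mul]
    refine Finset.sum_congr rfl fun m _ => ?_
    have hE : (Real.exp (-(x * r ^ α) / Pt)) ^ m = Real.exp (-(x * m / Pt * r ^ α)) := by
      rw [← Real.exp_nat_mul]; congr 1; ring
    rw [hgdef]
    simp only []
    rw [one_pow, mul_one, neg_pow, div_pow, hE, ← pow_mul, Nat.mul_comm (M-1) m]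
    have h1 : ((x + 1) ^ (m * (M - 1)) : ℝ) ≠ 0 := pow_ne_zero _ hx1.ne'
    field_simp
  -- Step 2 : integrability and exchanging sum and integral
  have hcont : ∀ m : ℕ, ContinuousOn (g m) (Set.uIcc ξ ρ) := by
    intro m
    have hpow : ContinuousOn (fun r : ℝ => r ^ α) (Set.uIcc ξ ρ) := by
      intro r hr
      have hr0 : 0 < r := lt_of_lt_of_le hξ ((Set.uIcc_of_le hξρ.le ▸ hr).1)
      exact (Real.continuousAt_rpow_const r α (Or.inl hr0.ne')).continuousWithinAt
    apply ContinuousOn.mul continuousOn_const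
    apply ContinuousOn.mul (by fun_prop)
    exact Real.continuous_exp.comp_continuousOn ((continuousOn_const.mul hpow).neg)
  have hsum : (∫ r in ξ..ρ,
      (1 - Real.exp (-(x * r ^ α) / Pt) / (x + 1) ^ (M - 1)) ^ N * (2 * r / (ρ ^ 2 - ξ ^ 2)))
      = ∑ m ∈ Finset.range (N + 1), ∫ r in ξ..ρ, g m r := by
    rw [intervalIntegral.integral_congr (fun r _ => hpt r)]
    exact intervalIntegral.integral_finset_sum
      (fun m _ => (hcont m).intervalIntegrable)
  rw [hsum]
  -- Step 3 : the m = 0 term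
  have hzero : (∫ r in ξ..ρ, g 0 r) = 1 := by
    have : ∀ r : ℝ, g 0 r = (ρ ^ 2 - ξ ^ 2)⁻¹ * (2 * r) := by
      intro r; rw [hgdef]; simp
    rw [intervalIntegral.integral_congr (fun r _ => this r),
      intervalIntegral.integral_const_mul, intervalIntegral.integral_const_mul,
      integral_id]
    field_simp
  -- Step 4 : the m ≥ 1 terms
  have hterm : ∀ m ∈ Finset.Icc 1 N, (∫ r in ξ..ρ, g m r) =
      (2 / (α * (ρ ^ 2 - ξ ^ 2))) * (Pt / x) ^ (2 / α) *
        ((N.choose m : ℝ) * (-1 : ℝ) ^ m /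
            ((m : ℝ) ^ (2 / α) * (x + 1) ^ (m * (M - 1))) *
          (upperGamma (2 / α) (x * m * ξ ^ α / Pt) -
            upperGamma (2 / α) (x * m * ρ ^ α / Pt))) := by
    intro m hm
    have hm1 : 1 ≤ m := (Finset.mem_Icc.mp hm).1
    have hmpos : (0:ℝ) < m := by exact_mod_cast hm1
    set k : ℝ := x * m / Pt with hk
    have hkpos : 0 < k := by positivity
    have hG : ∀ z : ℝ, k * z ^ α = x * m * z ^ α / Pt := fun z => by rw [hk]; ring
    have hconst : (∫ r in ξ..ρ, g m r) = (N.choose m : ℝ) * (-1) ^ m /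
        (x + 1) ^ (m * (M - 1)) / (ρ ^ 2 - ξ ^ 2) *
        ∫ r in ξ..ρ, 2 * r * Real.exp (-(k * r ^ α)) := by
      rw [← intervalIntegral.integral_const_mul]
    rw [hconst, subst_lemma hkpos hα0 hξ hξρ]
    have hle : k * ξ ^ α ≤ k * ρ ^ α := by
      apply mul_le_mul_of_nonneg_left _ hkpos.le
      exact Real.rpow_le_rpow hξ.le hξρ.le hα0.le
    have hgam := upperGamma_sub (a := 2/α) (by positivity)
      (mul_pos hkpos (Real.rpow_pos_of_pos hξ α)) hle
    rw [← hgam, hG ξ, hG ρ]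
    have hkval : k ^ (-(2 / α)) = (Pt / x) ^ (2 / α) / (m : ℝ) ^ (2 / α) := by
      rw [Real.rpow_neg hkpos.le, ← Real.inv_rpow hkpos.le,
        show k⁻¹ = (Pt / x) / (m : ℝ) from by rw [hk]; field_simp,
        Real.div_rpow (by positivity) hmpos.le]
    rw [hkval]
    have hne1 : ((x + 1) ^ (m * (M - 1)) : ℝ) ≠ 0 := pow_ne_zero _ hx1.ne'
    have hne2 : ((m : ℝ) ^ (2 / α)) ≠ 0 := (Real.rpow_pos_of_pos hmpos _).ne'
    field_simp
  -- Step 5 : assemble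
  have hins : Finset.range (N + 1) = insert 0 (Finset.Icc 1 N) := by
    ext a; simp only [Finset.mem_range, Finset.mem_insert, Finset.mem_Icc]; omega
  rw [hins, Finset.sum_insert (by simp), hzero, Finset.sum_congr rfl hterm,
    ← Finset.mul_sum]
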